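/- Let S be a commutative ring and R a commutative S-algebra which is formally étale over S (Algebra.FormallyEtale S R). Let γ be a ring endomorphism of the power series ring S[[X]] such that γ(X) = X and such that the endomorphism of S[[X]]/(X) ≅ S induced by γ is the identity of S. Let ι : S[[X]] → R[[X]] be the coefficientwise map induced by the algebra map S → R. Then there exists a unique ring endomorphism γ̃ of R[[X]] such that γ̃ ∘ ι = ι ∘ γ and such that the endomorphism of R[[X]]/(X) ≅ R induced by γ̃ is the identity of R. -/

import Mathlib

universe u

open Ideal.Quotient in
theorem liftRingHom_existsUnique (S R B : Type u) [CommRing S] [CommRing R] [CommRing B]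
    [Algebra S R] [Algebra.FormallyEtale S R]
    (ψ : S →+* B) (π : B →+* R) (σ : R →+* B)
    (hπψ : π.comp ψ = algebraMap S R) (hπσ : π.comp σ = RingHom.id R)
    (I : Ideal B) (hI : I = RingHom.ker π)
    (hH : ∀ b : B, (∀ n, b ∈ I ^ n) → b = 0)
    (hC : ∀ c : ℕ → B, (∀ m n, m ≤ n → c n - c m ∈ I ^ m) →
      ∃ L : B, ∀ n, L - c n ∈ I ^ n) :
    ∃! φ : R →+* B, φ.comp (algebraMap S R) = ψ ∧ π.comp φ = RingHom.id R := by
  letI : Algebra S B := ψ.toAlgebra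
  have halg : algebraMap S B = ψ := rfl
  -- membership in I from π
  have memI : ∀ b : B, b ∈ I ↔ π b = 0 := by
    intro b; rw [hI]; exact Iff.rfl
  have hσψ : ∀ s, σ (algebraMap S R s) - ψ s ∈ I := by
    intro s
    have e1 : π (σ (algebraMap S R s)) = algebraMap S R s := by
      conv_lhs => rw [← RingHom.comp_apply, hπσ]
      rfl
    have e2 : π (ψ s) = algebraMap S R s := by
      conv_lhs => rw [← RingHom.comp_apply, hπψ]
    rw [memI, map_sub, e1, e2, sub_self]
  -- the base map to B ⧸ I
  have f0comm : ∀ s : S, (mk I).comp σ (algebraMap S R s) = algebraMap S (B ⧸ I) s := by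
    intro s
    have : algebraMap S (B ⧸ I) s = mk I (algebraMap S B s) := ((mkₐ S I).commutes s).symm
    rw [this, halg, RingHom.comp_apply, Ideal.Quotient.mk_eq_mk_iff_sub_mem]
    exact hσψ s
  let f0 : R →ₐ[S] B ⧸ I := AlgHom.mk ((mk I).comp σ) f0comm
  -- the projections p n : B ⧸ I^(n+1) →ₐ[S] B ⧸ I
  have ple : ∀ n : ℕ, I ^ (n + 1) ≤ I := fun n => Ideal.pow_le_self (Nat.succ_ne_zero n)
  let p : ∀ n : ℕ, (B ⧸ I ^ (n + 1)) →ₐ[S] B ⧸ I := fun n =>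
    AlgHom.mk (factor (ple n)) (by
      intro s
      show factor (ple n) (algebraMap S (B ⧸ I ^ (n+1)) s)
          = algebraMap S (B ⧸ I) s
      rw [show algebraMap S (B ⧸ I ^ (n+1)) s = mk (I ^ (n+1)) (algebraMap S B s) from
        ((mkₐ S (I ^ (n+1))).commutes s).symm, factor_mk]
      exact (mkₐ S I).commutes s)
  have psurj : ∀ n, Function.Surjective (p n) := by
    intro n y
    obtain ⟨b, rfl⟩ := Ideal.Quotient.mk_surjective y
    exact ⟨mk _ b, factor_mk (ple n) _⟩
  have pker : ∀ n, RingHom.ker ((p n) : (B ⧸ I ^ (n+1)) →+* B ⧸ I)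
      = I.map (mk (I ^ (n + 1))) := by
    intro n
    show RingHom.ker (factor (ple n)) = _
    unfold Ideal.Quotient.factor
    refine (Ideal.ker_quotient_lift _ _).trans ?_
    congr 1
    exact Ideal.mk_ker
  have pnil : ∀ n, IsNilpotent (RingHom.ker ((p n) : (B ⧸ I ^ (n+1)) →+* B ⧸ I)) := by
    intro n
    rw [pker n]
    exact ⟨n + 1, by rw [← Ideal.map_pow, Ideal.map_quotient_self]; simp⟩
  -- the lifts
  let Φ : ∀ n : ℕ, R →ₐ[S] B ⧸ I ^ (n + 1) := fun n =>
    Algebra.FormallySmooth.liftOfSurjective f0 (p n) (psurj n) (pnil n)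
  have hΦ : ∀ n r, p n (Φ n r) = f0 r := fun n r =>
    Algebra.FormallySmooth.liftOfSurjective_apply f0 (p n) (psurj n) (pnil n) r
  -- compatibility
  have compatΦ : ∀ m n : ℕ, ∀ h : m ≤ n, ∀ r,
      factor (show I ^ (n + 1) ≤ I ^ (m + 1) from Ideal.pow_le_pow_right (Nat.succ_le_succ h)) (Φ n r)
        = Φ m r := by
    intro m n hmn
    have hle : I ^ (n+1) ≤ I ^ (m+1) := Ideal.pow_le_pow_right (by omega)
    let Q : (B ⧸ I ^ (n+1)) →ₐ[S] B ⧸ I ^ (m+1) :=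
      AlgHom.mk (factor hle) (by
        intro s
        show factor hle (algebraMap S (B ⧸ I ^ (n+1)) s)
            = algebraMap S (B ⧸ I ^ (m+1)) s
        rw [show algebraMap S (B ⧸ I ^ (n+1)) s = mk (I ^ (n+1)) (algebraMap S B s) from
          ((mkₐ S (I ^ (n+1))).commutes s).symm, factor_mk]
        exact (mkₐ S (I ^ (m+1))).commutes s)
    have : Q.comp (Φ n) = Φ m := by
      apply Algebra.FormallyUnramified.ext' ((p m) : (B ⧸ I ^ (m+1)) →+* B ⧸ I) (pnil m)
      intro x
      have h1 : ∀ y : B ⧸ I ^ (n+1), p m (Q y) = p n y := by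
        intro y
        obtain ⟨b, rfl⟩ := Ideal.Quotient.mk_surjective y
        show p m (factor hle (mk _ b)) = _
        rw [factor_mk]
        show factor (ple m) (mk _ b) = factor (ple n) (mk _ b)
        rw [factor_mk, factor_mk]
      show p m (Q (Φ n x)) = p m (Φ m x)
      rw [h1, hΦ, hΦ]
    intro r
    exact DFunLike.congr_fun this r
  -- choose representatives
  let c : R → ℕ → B := fun r n => (Ideal.Quotient.mk_surjective (Φ n r)).choose
  have hc : ∀ r n, mk (I ^ (n + 1)) (c r n) = Φ n r := fun r n =>
    (Ideal.Quotient.mk_surjective (Φ n r)).choose_spec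
  have compatc : ∀ r, ∀ m n : ℕ, m ≤ n → c r n - c r m ∈ I ^ (m + 1) := by
    intro r m n hmn
    rw [← Ideal.Quotient.mk_eq_mk_iff_sub_mem, hc, ← compatΦ m n hmn r, ← hc r n, factor_mk]
  have compatc' : ∀ r, ∀ m n : ℕ, m ≤ n → c r n - c r m ∈ I ^ m := fun r m n hmn =>
    Ideal.pow_le_pow_right (Nat.le_succ m) (compatc r m n hmn)
  -- the limit
  let φf : R → B := fun r => (hC (c r) (compatc' r)).choose
  have hφf : ∀ r n, φf r - c r n ∈ I ^ n := fun r => (hC (c r) (compatc' r)).choose_spec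
  have key : ∀ r n, mk (I ^ (n + 1)) (φf r) = Φ n r := by
    intro r n
    rw [← hc, Ideal.Quotient.mk_eq_mk_iff_sub_mem]
    have h1 := hφf r (n + 1)
    have h2 := compatc r n (n + 1) (Nat.le_succ n)
    have := Ideal.add_mem _ h1 h2
    simpa using this
  have hH' : ∀ b : B, (∀ n, b ∈ I ^ (n + 1)) → b = 0 := by
    intro b hb
    apply hH
    intro n
    cases n with
    | zero => simp [Ideal.one_eq_top]
    | succ k => exact hb k
  have zero_of_mk : ∀ b : B, (∀ n : ℕ, mk (I ^ (n + 1)) b = 0) → b = 0 := by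
    intro b hb
    exact hH' b fun n => (Ideal.Quotient.eq_zero_iff_mem).1 (hb n)
  have eq_of_mk : ∀ b b' : B, (∀ n : ℕ, mk (I ^ (n + 1)) b = mk (I ^ (n + 1)) b') → b = b' := by
    intro b b' hb
    have : b - b' = 0 := zero_of_mk _ fun n => by rw [map_sub, hb n, sub_self]
    exact sub_eq_zero.mp this
  -- φf is a ring hom
  have mkφ_mul : ∀ (a b : R), φf (a * b) = φf a * φf b := by
    intro a b
    apply eq_of_mk
    intro n
    rw [map_mul, key, key, key, ← map_mul (Φ n)]
  have mkφ_add : ∀ (a b : R), φf (a + b) = φf a + φf b := by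
    intro a b
    apply eq_of_mk
    intro n
    rw [map_add, key, key, key, ← map_add (Φ n)]
  have mkφ_one : φf 1 = 1 := by
    apply eq_of_mk
    intro n
    rw [key, map_one, map_one]
  have mkφ_zero : φf 0 = 0 := by
    apply eq_of_mk
    intro n
    rw [key, map_zero, map_zero]
  let φhom : R →+* B :=
    { toFun := φf, map_one' := mkφ_one, map_mul' := mkφ_mul,
      map_zero' := mkφ_zero, map_add' := mkφ_add }
  have hcomp : φhom.comp (algebraMap S R) = ψ := by
    ext s
    show φf (algebraMap S R s) = ψ s
    apply eq_of_mk
    intro n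
    rw [key]
    have h1 : Φ n (algebraMap S R s) = algebraMap S (B ⧸ I ^ (n+1)) s := (Φ n).commutes s
    have h2 : algebraMap S (B ⧸ I ^ (n+1)) s = mk (I ^ (n+1)) (algebraMap S B s) :=
      ((mkₐ S (I ^ (n+1))).commutes s).symm
    rw [h1, h2, halg]
  have hmkI : ∀ b : B, mk I b = factor (ple 0) (mk (I ^ (0+1)) b) := by
    intro b
    rw [factor_mk]
  have hπcomp : π.comp φhom = RingHom.id R := by
    ext r
    show π (φf r) = r
    have h1 : mk I (φf r) = mk I (σ r) := by
      rw [hmkI, key, hmkI]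
      have := hΦ 0 r
      exact this
    have h2 : φf r - σ r ∈ I := (Ideal.Quotient.mk_eq_mk_iff_sub_mem _ _).1 h1
    have h3 : π (φf r) - π (σ r) = 0 := by
      rw [← map_sub]
      exact (memI _).1 h2
    have h4 : π (σ r) = r := by
      conv_lhs => rw [← RingHom.comp_apply, hπσ]
      rfl
    rw [h4] at h3
    exact sub_eq_zero.mp h3
  refine ⟨φhom, ⟨hcomp, hπcomp⟩, ?_⟩
  -- uniqueness
  intro φ' ⟨h1', h2'⟩
  let φ'a : R →ₐ[S] B := AlgHom.mk φ' (fun s => (DFunLike.congr_fun h1' s : _))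
  have hmk' : ∀ n, ((mkₐ S (I ^ (n+1))).comp φ'a) = Φ n := by
    intro n
    apply Algebra.FormallyUnramified.ext' ((p n) : (B ⧸ I ^ (n+1)) →+* B ⧸ I) (pnil n)
    intro x
    show p n (mk (I ^ (n+1)) (φ' x)) = p n (Φ n x)
    rw [hΦ]
    show factor (ple n) (mk (I ^ (n+1)) (φ' x)) = mk I (σ x)
    rw [factor_mk, Ideal.Quotient.mk_eq_mk_iff_sub_mem, memI, map_sub]
    have e1 : π (φ' x) = x := by
      conv_lhs => rw [← RingHom.comp_apply, h2']
      rfl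
    have e2 : π (σ x) = x := by
      conv_lhs => rw [← RingHom.comp_apply, hπσ]
      rfl
    rw [e1, e2, sub_self]
  ext r
  show φ' r = φf r
  apply eq_of_mk
  intro n
  have := DFunLike.congr_fun (hmk' n) r
  rw [key]
  exact this

open PowerSeries in
theorem mem_span_X_pow {R : Type u} [CommRing R] (n : ℕ) (f : PowerSeries R) :
    f ∈ (Ideal.span {(X : PowerSeries R)}) ^ n ↔ ∀ k < n, coeff (R := R) k f = 0 := by
  rw [Ideal.span_singleton_pow, Ideal.mem_span_singleton]
  exact X_pow_dvd_iff

open PowerSeries in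
theorem powerSeries_ringHom_ext {A B' : Type u} [CommRing A] [CommRing B']
    (h₁ h₂ : PowerSeries A →+* PowerSeries B')
    (hCc : ∀ a, h₁ (C (R := A) a) = h₂ (C (R := A) a)) (hXx : h₁ X = h₂ X)
    (hX0 : constantCoeff (R := B') (h₁ X) = 0) : h₁ = h₂ := by
  have hXdvd : (X : PowerSeries B') ∣ h₁ X := X_dvd_iff.2 hX0
  ext f k
  set N := k + 1 with hN
  set s : PowerSeries A := ∑ n ∈ Finset.range N, C (R := A) (coeff (R := A) n f) * X ^ n with hs
  have hcoeffs : ∀ m, m < N → coeff (R := A) m s = coeff (R := A) m f := by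
    intro m hm
    rw [hs, map_sum]
    have : ∀ n ∈ Finset.range N,
        coeff (R := A) m (C (R := A) (coeff (R := A) n f) * X ^ n) = if m = n then coeff (R := A) n f else 0 := by
      intro n _
      rw [coeff_C_mul, coeff_X_pow]
      split <;> simp_all
    rw [Finset.sum_congr rfl this, Finset.sum_ite_eq (Finset.range N) m (fun n => coeff (R := A) n f)]
    simp [Finset.mem_range.2 hm]
  have hdvd : (X : PowerSeries A) ^ N ∣ f - s := by
    rw [X_pow_dvd_iff]
    intro m hm
    rw [map_sub, hcoeffs m hm, sub_self]
  obtain ⟨g, hg⟩ := hdvd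
  have hf : f = s + X ^ N * g := by rw [← hg]; ring
  have hzero : ∀ h : PowerSeries A →+* PowerSeries B', h X = h₁ X →
      coeff (R := B') k (h (X ^ N * g)) = 0 := by
    intro h hh
    rw [map_mul, map_pow, hh]
    have : (X : PowerSeries B') ^ N ∣ h₁ X ^ N * h g :=
      Dvd.dvd.mul_right (pow_dvd_pow_of_dvd hXdvd N) _
    exact X_pow_dvd_iff.1 this k (by omega)
  have hseq : h₁ s = h₂ s := by
    rw [hs, map_sum, map_sum]
    apply Finset.sum_congr rfl
    intro n _
    rw [map_mul, map_mul, map_pow, map_pow, hCc, hXx]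
  rw [hf, map_add, map_add, map_add, map_add, hseq, hzero h₁ rfl, hzero h₂ hXx.symm]

open PowerSeries in
theorem coeff_eval₂_eq_zero {A B : Type u} [CommRing A] [CommRing B]
    (φ : A →+* PowerSeries B) (k : ℕ) (p : Polynomial A)
    (hp : ∀ n ≤ k, p.coeff n = 0) :
    coeff (R := B) k (Polynomial.eval₂ φ (X : PowerSeries B) p) = 0 := by
  rw [Polynomial.eval₂_eq_sum, Polynomial.sum, map_sum]
  apply Finset.sum_eq_zero
  intro n hn
  have hnk : ¬ n ≤ k := by
    intro h
    exact (Polynomial.mem_support_iff.1 hn) (hp n h)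
  rw [coeff_mul_X_pow']
  simp [hnk]

open PowerSeries in
theorem coeff_eval₂_trunc_eq {A B : Type u} [CommRing A] [CommRing B]
    (φ : A →+* PowerSeries B) (k m : ℕ) (hm : k < m) (f : PowerSeries A) :
    coeff (R := B) k (Polynomial.eval₂ φ (X : PowerSeries B) (trunc m f))
      = coeff (R := B) k (Polynomial.eval₂ φ (X : PowerSeries B) (trunc (k + 1) f)) := by
  have h : ∀ n ≤ k, (trunc m f - trunc (k + 1) f).coeff n = 0 := by
    intro n hn
    rw [Polynomial.coeff_sub, coeff_trunc, coeff_trunc]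
    rw [if_pos (by omega), if_pos (by omega), sub_self]
  have := coeff_eval₂_eq_zero φ k _ h
  rw [Polynomial.eval₂_sub, map_sub, sub_eq_zero] at this
  exact this

open PowerSeries in
noncomputable def liftPSfun {A B : Type u} [CommRing A] [CommRing B]
    (φ : A →+* PowerSeries B) : PowerSeries A → PowerSeries B := fun f =>
  PowerSeries.mk fun k => coeff (R := B) k (Polynomial.eval₂ φ (X : PowerSeries B) (trunc (k + 1) f))

open PowerSeries in
theorem coeff_liftPSfun {A B : Type u} [CommRing A] [CommRing B]
    (φ : A →+* PowerSeries B) (f : PowerSeries A) (k : ℕ) :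
    coeff (R := B) k (liftPSfun φ f)
      = coeff (R := B) k (Polynomial.eval₂ φ (X : PowerSeries B) (trunc (k + 1) f)) :=
  coeff_mk _ _

open PowerSeries in
noncomputable def liftPS {A B : Type u} [CommRing A] [CommRing B]
    (φ : A →+* PowerSeries B) : PowerSeries A →+* PowerSeries B where
  toFun := liftPSfun φ
  map_one' := by
    apply PowerSeries.ext
    intro k
    rw [coeff_liftPSfun, trunc_one, Polynomial.eval₂_one]
  map_zero' := by
    apply PowerSeries.ext
    intro k
    rw [coeff_liftPSfun, map_zero, Polynomial.eval₂_zero]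
  map_add' f g := by
    apply PowerSeries.ext
    intro k
    rw [coeff_liftPSfun, map_add, Polynomial.eval₂_add, map_add, map_add,
      coeff_liftPSfun, coeff_liftPSfun]
  map_mul' f g := by
    apply PowerSeries.ext
    intro k
    rw [coeff_liftPSfun]
    have h1 : ∀ n ≤ k, (trunc (k+1) f * trunc (k+1) g - trunc (k+1) (f * g)).coeff n = 0 := by
      intro n hn
      rw [Polynomial.coeff_sub, sub_eq_zero]
      have e1 : (trunc (k+1) f * trunc (k+1) g).coeff n
          = coeff (R := A) n ((trunc (k+1) f : PowerSeries A) * (trunc (k+1) g : PowerSeries A)) := by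
        rw [← Polynomial.coe_mul]
        exact (Polynomial.coeff_coe _ _).symm
      have e2 : coeff (R := A) n ((trunc (k+1) f : PowerSeries A) * (trunc (k+1) g : PowerSeries A))
          = coeff (R := A) n (f * g) := by
        have h3 := trunc_trunc_mul_trunc (n := k + 1) f g
        have h4 : ((trunc (k+1) ((trunc (k+1) f : PowerSeries A)
              * (trunc (k+1) g : PowerSeries A))).coeff n)
            = ((trunc (k+1) (f * g)).coeff n) := by rw [h3]
        rw [coeff_trunc, coeff_trunc, if_pos (by omega), if_pos (by omega)] at h4
        exact h4
      rw [e1, e2, coeff_trunc, if_pos (by omega)]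
    have h2 : coeff (R := B) k (Polynomial.eval₂ φ (X : PowerSeries B) (trunc (k+1) (f * g)))
        = coeff (R := B) k (Polynomial.eval₂ φ (X : PowerSeries B)
            (trunc (k+1) f * trunc (k+1) g)) := by
      have := coeff_eval₂_eq_zero φ k _ h1
      rw [Polynomial.eval₂_sub, map_sub, sub_eq_zero] at this
      exact this.symm
    rw [h2, Polynomial.eval₂_mul, PowerSeries.coeff_mul, PowerSeries.coeff_mul]
    apply Finset.sum_congr rfl
    intro x hx
    have hxk : x.1 ≤ k ∧ x.2 ≤ k := by
      have := Finset.HasAntidiagonal.mem_antidiagonal.1 hx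
      omega
    rw [coeff_liftPSfun, coeff_liftPSfun, coeff_eval₂_trunc_eq φ x.1 (k+1) (by omega) f,
      coeff_eval₂_trunc_eq φ x.2 (k+1) (by omega) g]

open PowerSeries in
theorem coeff_liftPS {A B : Type u} [CommRing A] [CommRing B]
    (φ : A →+* PowerSeries B) (f : PowerSeries A) (k : ℕ) :
    coeff (R := B) k (liftPS φ f)
      = coeff (R := B) k (Polynomial.eval₂ φ (X : PowerSeries B) (trunc (k + 1) f)) :=
  coeff_liftPSfun φ f k

open PowerSeries in
theorem liftPS_C {A B : Type u} [CommRing A] [CommRing B]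
    (φ : A →+* PowerSeries B) (a : A) : liftPS φ (C (R := A) a) = φ a := by
  apply PowerSeries.ext
  intro k
  rw [coeff_liftPS, trunc_C, Polynomial.eval₂_C]

open PowerSeries in
theorem liftPS_X {A B : Type u} [CommRing A] [CommRing B]
    (φ : A →+* PowerSeries B) : liftPS φ (X : PowerSeries A) = X := by
  apply PowerSeries.ext
  intro k
  rw [coeff_liftPS]
  cases k with
  | zero =>
    have h : trunc 1 (X : PowerSeries A) = 0 := by
      apply Polynomial.ext
      intro n
      rw [coeff_trunc]
      split
      · have hn : n = 0 := by omega
        simp [hn]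
      · simp
    rw [h, Polynomial.eval₂_zero]
    simp
  | succ j =>
    rw [show j + 1 + 1 = j + 2 from rfl, trunc_X, Polynomial.eval₂_X]

open PowerSeries in
theorem constantCoeff_liftPS {A B : Type u} [CommRing A] [CommRing B]
    (φ : A →+* PowerSeries B) (f : PowerSeries A) :
    constantCoeff (R := B) (liftPS φ f) = constantCoeff (R := B) (φ (constantCoeff (R := A) f)) := by
  have h1 : trunc 1 f = Polynomial.C (constantCoeff (R := A) f) := by
    apply Polynomial.ext
    intro n
    rw [coeff_trunc]
    rcases Nat.eq_zero_or_pos n with h | h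
    · subst h
      simp [coeff_zero_eq_constantCoeff]
    · rw [if_neg (by omega), Polynomial.coeff_C, if_neg (by omega)]
  have h2 := coeff_liftPS φ f 0
  rw [coeff_zero_eq_constantCoeff] at h2
  rw [h2, h1, Polynomial.eval₂_C]

/-- Let `R` be a formally étale algebra over a commutative ring `S`, and
let `γ` be a ring endomorphism of `S[[X]]` with `γ(X) = X` which induces the identity on
`S[[X]]/(X) ≅ S`. Let `ι : S[[X]] → R[[X]]` be the coefficientwise map induced by `S → R`.
Then there is a unique ring endomorphism `γ̃` of `R[[X]]` with `γ̃ ∘ ι = ι ∘ γ` inducing the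
identity on `R[[X]]/(X) ≅ R`. -/
theorem formallyEtale_lift_powerSeries_endomorphism
    (S R : Type u) [CommRing S] [CommRing R] [Algebra S R] [Algebra.FormallyEtale S R]
    (γ : PowerSeries S →+* PowerSeries S)
    (hX : γ PowerSeries.X = PowerSeries.X)
    (hconst : ∀ f : PowerSeries S,
      PowerSeries.constantCoeff (R := S) (γ f) = PowerSeries.constantCoeff (R := S) f) :
    ∃! γt : PowerSeries R →+* PowerSeries R,
      γt.comp (PowerSeries.map (algebraMap S R)) =
        (PowerSeries.map (algebraMap S R)).comp γ ∧
      ∀ f : PowerSeries R,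
        PowerSeries.constantCoeff (R := R) (γt f) = PowerSeries.constantCoeff (R := R) f := by
  classical
  let ι : PowerSeries S →+* PowerSeries R := PowerSeries.map (algebraMap S R)
  let ψ : S →+* PowerSeries R := ι.comp (γ.comp (PowerSeries.C (R := S)))
  let π : PowerSeries R →+* R := PowerSeries.constantCoeff (R := R)
  let σr : R →+* PowerSeries R := PowerSeries.C (R := R)
  have hπψ : π.comp ψ = algebraMap S R := by
    apply RingHom.ext
    intro s
    show PowerSeries.constantCoeff (R := R) (PowerSeries.map (algebraMap S R)
      (γ (PowerSeries.C (R := S) s))) = algebraMap S R s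
    have e : (PowerSeries.constantCoeff (R := R)) (PowerSeries.map (algebraMap S R)
        (γ (PowerSeries.C (R := S) s)))
        = algebraMap S R (PowerSeries.constantCoeff (R := S) (γ (PowerSeries.C (R := S) s))) := by
      rw [← PowerSeries.coeff_zero_eq_constantCoeff_apply, PowerSeries.coeff_map,
        PowerSeries.coeff_zero_eq_constantCoeff_apply]
    rw [e, hconst, PowerSeries.constantCoeff_C]
  have hπσ : π.comp σr = RingHom.id R := by
    apply RingHom.ext
    intro r
    exact PowerSeries.constantCoeff_C r
  have hI : (Ideal.span {(PowerSeries.X : PowerSeries R)}) = RingHom.ker π := by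
    ext f
    rw [Ideal.mem_span_singleton, PowerSeries.X_dvd_iff, RingHom.mem_ker]
  have hH : ∀ b : PowerSeries R,
      (∀ n, b ∈ (Ideal.span {(PowerSeries.X : PowerSeries R)}) ^ n) → b = 0 := by
    intro b hb
    apply PowerSeries.ext
    intro k
    have := (mem_span_X_pow (k + 1) b).1 (hb (k + 1)) k (by omega)
    simpa using this
  have hC : ∀ c : ℕ → PowerSeries R,
      (∀ m n, m ≤ n → c n - c m ∈ (Ideal.span {(PowerSeries.X : PowerSeries R)}) ^ m) →
      ∃ L : PowerSeries R, ∀ n,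
        L - c n ∈ (Ideal.span {(PowerSeries.X : PowerSeries R)}) ^ n := by
    intro c hc
    refine ⟨PowerSeries.mk fun k => PowerSeries.coeff (R := R) k (c (k + 1)), ?_⟩
    intro n
    rw [mem_span_X_pow]
    intro k hk
    rw [map_sub, PowerSeries.coeff_mk]
    have h1 := (mem_span_X_pow (k + 1) _).1 (hc (k + 1) n (by omega)) k (by omega)
    rw [map_sub, sub_eq_zero] at h1
    rw [← h1, sub_self]
  obtain ⟨φ, ⟨hφ1, hφ2⟩, hφuniq⟩ := liftRingHom_existsUnique S R (PowerSeries R)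
    ψ π σr hπψ hπσ _ hI hH hC
  have hccφ : ∀ r, PowerSeries.constantCoeff (R := R) (φ r) = r := fun r =>
    DFunLike.congr_fun hφ2 r
  have hγtX : liftPS φ (PowerSeries.X : PowerSeries R) = PowerSeries.X := liftPS_X φ
  refine ⟨liftPS φ, ⟨?_, ?_⟩, ?_⟩
  · apply powerSeries_ringHom_ext
    · intro a
      show liftPS φ (ι (PowerSeries.C (R := S) a)) = ι (γ (PowerSeries.C (R := S) a))
      rw [show ι (PowerSeries.C (R := S) a) = PowerSeries.C (R := R) (algebraMap S R a) from
        PowerSeries.map_C _ a, liftPS_C]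
      exact DFunLike.congr_fun hφ1 a
    · show liftPS φ (ι PowerSeries.X) = ι (γ PowerSeries.X)
      rw [hX]
      show liftPS φ (PowerSeries.map (algebraMap S R) PowerSeries.X)
        = PowerSeries.map (algebraMap S R) PowerSeries.X
      rw [PowerSeries.map_X, hγtX]
    · show PowerSeries.constantCoeff (R := R) (liftPS φ (ι PowerSeries.X)) = 0
      show PowerSeries.constantCoeff (R := R)
        (liftPS φ (PowerSeries.map (algebraMap S R) PowerSeries.X)) = 0
      rw [PowerSeries.map_X, hγtX]
      simp
  · intro f
    rw [constantCoeff_liftPS, hccφ]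
  · intro γt' ⟨hA, hB⟩
    have hcond1 : (γt'.comp (PowerSeries.C (R := R))).comp (algebraMap S R) = ψ := by
      apply RingHom.ext
      intro s
      show γt' (PowerSeries.C (R := R) (algebraMap S R s)) = ψ s
      rw [← PowerSeries.map_C (algebraMap S R) s]
      exact DFunLike.congr_fun hA (PowerSeries.C (R := S) s)
    have hcond2 : π.comp (γt'.comp (PowerSeries.C (R := R))) = RingHom.id R := by
      apply RingHom.ext
      intro r
      show PowerSeries.constantCoeff (R := R) (γt' (PowerSeries.C (R := R) r)) = r
      rw [hB, PowerSeries.constantCoeff_C]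
    have hφ' : γt'.comp (PowerSeries.C (R := R)) = φ := hφuniq _ ⟨hcond1, hcond2⟩
    have hγt'X : γt' (PowerSeries.X : PowerSeries R) = PowerSeries.X := by
      have h1 : (PowerSeries.X : PowerSeries R)
          = PowerSeries.map (algebraMap S R) PowerSeries.X := (PowerSeries.map_X _).symm
      rw [h1]
      have := DFunLike.congr_fun hA (PowerSeries.X : PowerSeries S)
      simp only [RingHom.comp_apply] at this
      rw [this, hX]
    apply powerSeries_ringHom_ext
    · intro a
      rw [show γt' (PowerSeries.C (R := R) a) = φ a from DFunLike.congr_fun hφ' a, liftPS_C]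
    · rw [hγt'X, hγtX]
    · rw [hγt'X]
      simp
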